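/- arXiv:2311.17855 — 3 statements merged into one kernel-verified Lean document; each statement's English description precedes it below -/
import Mathlib

section
/- Let P, P̄ ∈ ℝ^{S×S} be row-stochastic matrices, γ ∈ [0,1), r ∈ ℝ^S, φ₁,…,φ_d : S → ℝ, εM, εQ ≥ 0, and β > 0. Assume for every x ∈ S: (i) ∑_y |P(x,y) − P̄(x,y)| ≤ √2·εM + (2/β)·εQ; (ii) ∑_{i=1}^d |(Pφᵢ)(x) − (P̄φᵢ)(x)| ≤ √d·(β·εM + 2·εQ), where (Pφ)(x) := ∑_y P(x,y)·φ(y). Set e₁ := (γ/(1−γ))·(√2·εM + (2/β)·εQ) and e₂ := (γ√d/(1−γ))·(β·εM + 2·εQ), and let V := (I − γP)⁻¹ r and V̄ := (I − γP̄)⁻¹ r. Then for every w ∈ ℝ^d: ‖V − V̄‖∞ ≤ e₁·‖V − ∑_{i=1}^d wᵢφᵢ‖∞ + e₂·‖w‖∞. -/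
open Finset Matrix

/-- Supremum norm of a vector indexed by a finite type. -/
noncomputable def supNorm {S : Type*} [Fintype S] (v : S → ℝ) : ℝ := ⨆ x, |v x|

lemma supNorm_le {S : Type*} [Fintype S] [Nonempty S] {v : S → ℝ} {c : ℝ}
    (h : ∀ x, |v x| ≤ c) : supNorm v ≤ c := ciSup_le h

lemma le_supNorm {S : Type*} [Fintype S] (v : S → ℝ) (x : S) : |v x| ≤ supNorm v :=
  le_ciSup (f := fun x => |v x|) (Set.Finite.bddAbove (Set.finite_range _)) x

lemma supNorm_nonneg {S : Type*} [Fintype S] (v : S → ℝ) : 0 ≤ supNorm v :=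
  Real.iSup_nonneg fun x => abs_nonneg _

lemma mulVec_one_sub_smul {S : Type*} [Fintype S] [DecidableEq S]
    (Q : Matrix S S ℝ) (γ : ℝ) (v : S → ℝ) (x : S) :
    ((1 - γ • Q).mulVec v) x = v x - γ * ∑ y, Q x y * v y := by
  simp [Matrix.mulVec, dotProduct, Matrix.sub_apply, Matrix.smul_apply, sub_mul,
    Finset.sum_sub_distrib, Finset.mul_sum, Matrix.one_apply, mul_assoc]

lemma bellman {S : Type*} [Fintype S] [Nonempty S] [DecidableEq S]
    (Q : Matrix S S ℝ) (γ : ℝ)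
    (hQ0 : ∀ x y, 0 ≤ Q x y) (hQ1 : ∀ x, ∑ y, Q x y = 1)
    (hγ0 : 0 ≤ γ) (hγ1 : γ < 1) (r : S → ℝ) (x : S) :
    (((1 : Matrix S S ℝ) - γ • Q)⁻¹.mulVec r) x
      = r x + γ * ∑ y, Q x y * (((1 : Matrix S S ℝ) - γ • Q)⁻¹.mulVec r) y := by
  have hdet : ((1 : Matrix S S ℝ) - γ • Q).det ≠ 0 := by
    intro hd
    obtain ⟨v, hv0, hAv⟩ := Matrix.exists_mulVec_eq_zero_iff.mpr hd
    have hvx : ∀ x, v x = γ * ∑ y, Q x y * v y := by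
      intro x
      have h := congrFun hAv x
      rw [mulVec_one_sub_smul] at h
      simp only [Pi.zero_apply] at h
      linarith [h]
    have hb : ∀ x, |v x| ≤ γ * supNorm v := by
      intro x
      rw [hvx x, abs_mul, abs_of_nonneg hγ0]
      gcongr
      calc |∑ y, Q x y * v y| ≤ ∑ y, |Q x y * v y| := Finset.abs_sum_le_sum_abs _ _
        _ ≤ ∑ y, Q x y * supNorm v := by
            apply Finset.sum_le_sum
            intro y _
            rw [abs_mul, abs_of_nonneg (hQ0 x y)]
            exact mul_le_mul_of_nonneg_left (le_supNorm v y) (hQ0 x y)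
        _ = supNorm v := by rw [← Finset.sum_mul, hQ1 x, one_mul]
    have h1 : supNorm v ≤ γ * supNorm v := supNorm_le hb
    have h2 : 0 ≤ supNorm v := supNorm_nonneg v
    have h3 : supNorm v ≤ 0 := by nlinarith
    apply hv0
    funext x
    have := le_antisymm ((le_supNorm v x).trans h3) (abs_nonneg _)
    simpa [abs_eq_zero] using this
  have hinv : ((1 : Matrix S S ℝ) - γ • Q) * ((1 : Matrix S S ℝ) - γ • Q)⁻¹ = 1 :=
    Matrix.mul_nonsing_inv _ (isUnit_iff_ne_zero.mpr hdet)
  have key : ((1 : Matrix S S ℝ) - γ • Q).mulVec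
      (((1 : Matrix S S ℝ) - γ • Q)⁻¹.mulVec r) = r := by
    rw [Matrix.mulVec_mulVec, hinv, Matrix.one_mulVec]
  have h := congrFun key x
  rw [mulVec_one_sub_smul] at h
  linarith [h]

theorem stmt13 {S : Type*} [Fintype S] [Nonempty S] [DecidableEq S]
    (P Pbar : Matrix S S ℝ) (γ : ℝ)
    (hP0 : ∀ x y, 0 ≤ P x y) (hP1 : ∀ x, ∑ y, P x y = 1)
    (hPbar0 : ∀ x y, 0 ≤ Pbar x y) (hPbar1 : ∀ x, ∑ y, Pbar x y = 1)
    (hγ0 : 0 ≤ γ) (hγ1 : γ < 1)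
    (r : S → ℝ)
    (d : ℕ) (φ : Fin d → S → ℝ) (εM εQ β : ℝ)
    (hεM : 0 ≤ εM) (hεQ : 0 ≤ εQ) (hβ : 0 < β)
    (hTV : ∀ x, ∑ y, |P x y - Pbar x y| ≤ Real.sqrt 2 * εM + (2 / β) * εQ)
    (hQ : ∀ x, ∑ i : Fin d, |(∑ y, P x y * φ i y) - ∑ y, Pbar x y * φ i y| ≤
      Real.sqrt d * (β * εM + 2 * εQ))
    (e₁ e₂ : ℝ)
    (he₁ : e₁ = (γ / (1 - γ)) * (Real.sqrt 2 * εM + (2 / β) * εQ))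
    (he₂ : e₂ = (γ * Real.sqrt d / (1 - γ)) * (β * εM + 2 * εQ))
    (V Vbar : S → ℝ)
    (hV : V = ((1 : Matrix S S ℝ) - γ • P)⁻¹.mulVec r)
    (hVbar : Vbar = ((1 : Matrix S S ℝ) - γ • Pbar)⁻¹.mulVec r) :
    ∀ w : Fin d → ℝ,
      supNorm (fun x => V x - Vbar x) ≤
        e₁ * supNorm (fun x => V x - ∑ i, w i * φ i x) + e₂ * supNorm w := by
  intro w
  have hBV : ∀ x, V x = r x + γ * ∑ y, P x y * V y := by
    intro x; rw [hV]; exact bellman P γ hP0 hP1 hγ0 hγ1 r x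
  have hBVbar : ∀ x, Vbar x = r x + γ * ∑ y, Pbar x y * Vbar y := by
    intro x; rw [hVbar]; exact bellman Pbar γ hPbar0 hPbar1 hγ0 hγ1 r x
  set c₁ : ℝ := Real.sqrt 2 * εM + (2 / β) * εQ with hc₁
  set c₂ : ℝ := Real.sqrt d * (β * εM + 2 * εQ) with hc₂
  set D := supNorm (fun x => V x - Vbar x) with hD
  set K := supNorm (fun x => V x - ∑ i, w i * φ i x) with hK
  set W := supNorm w with hW
  have hDnn : 0 ≤ D := supNorm_nonneg _
  have hKnn : 0 ≤ K := supNorm_nonneg _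
  have hWnn : 0 ≤ W := supNorm_nonneg _
  have hγ1' : (0:ℝ) < 1 - γ := by linarith
  -- pointwise decomposition
  have key : ∀ x, |V x - Vbar x| ≤ γ * (D + c₁ * K + c₂ * W) := by
    intro x
    have hdecomp : V x - Vbar x =
        γ * ((∑ y, Pbar x y * (V y - Vbar y))
          + (∑ y, (P x y - Pbar x y) * (V y - ∑ i, w i * φ i y))
          + (∑ i, w i * ((∑ y, P x y * φ i y) - ∑ y, Pbar x y * φ i y))) := by
      have h1 : V x - Vbar x = γ * ((∑ y, P x y * V y) - ∑ y, Pbar x y * Vbar y) := by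
        rw [hBV x, hBVbar x]; ring
      rw [h1]
      congr 1
      have swap : (∑ i, w i * ((∑ y, P x y * φ i y) - ∑ y, Pbar x y * φ i y))
          = ∑ y, (P x y - Pbar x y) * (∑ i, w i * φ i y) := by
        have e1 : (∑ i, w i * ((∑ y, P x y * φ i y) - ∑ y, Pbar x y * φ i y))
            = ∑ i, ∑ y, (P x y - Pbar x y) * (w i * φ i y) := by
          apply Finset.sum_congr rfl
          intro i _
          rw [mul_sub, Finset.mul_sum, Finset.mul_sum, ← Finset.sum_sub_distrib]
          apply Finset.sum_congr rfl
          intro y _; ring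
        rw [e1, Finset.sum_comm]
        apply Finset.sum_congr rfl
        intro y _
        rw [Finset.mul_sum]
      rw [swap, ← Finset.sum_sub_distrib, ← Finset.sum_add_distrib, ← Finset.sum_add_distrib]
      apply Finset.sum_congr rfl
      intro y _
      ring
    rw [hdecomp, abs_mul, abs_of_nonneg hγ0]
    gcongr
    have t1 : |∑ y, Pbar x y * (V y - Vbar y)| ≤ D := by
      calc |∑ y, Pbar x y * (V y - Vbar y)| ≤ ∑ y, |Pbar x y * (V y - Vbar y)| :=
            Finset.abs_sum_le_sum_abs _ _
        _ ≤ ∑ y, Pbar x y * D := by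
            apply Finset.sum_le_sum; intro y _
            rw [abs_mul, abs_of_nonneg (hPbar0 x y)]
            exact mul_le_mul_of_nonneg_left (le_supNorm (fun z => V z - Vbar z) y) (hPbar0 x y)
        _ = D := by rw [← Finset.sum_mul, hPbar1 x, one_mul]
    have t2 : |∑ y, (P x y - Pbar x y) * (V y - ∑ i, w i * φ i y)| ≤ c₁ * K := by
      calc |∑ y, (P x y - Pbar x y) * (V y - ∑ i, w i * φ i y)|
          ≤ ∑ y, |(P x y - Pbar x y)| * |(V y - ∑ i, w i * φ i y)| := by
            refine (Finset.abs_sum_le_sum_abs _ _).trans ?_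
            apply Finset.sum_le_sum; intro y _; rw [abs_mul]
        _ ≤ ∑ y, |(P x y - Pbar x y)| * K := by
            apply Finset.sum_le_sum; intro y _
            exact mul_le_mul_of_nonneg_left (le_supNorm (fun z => V z - ∑ i, w i * φ i z) y)
              (abs_nonneg _)
        _ = (∑ y, |(P x y - Pbar x y)|) * K := by rw [Finset.sum_mul]
        _ ≤ c₁ * K := mul_le_mul_of_nonneg_right (hTV x) hKnn
    have t3 : |∑ i, w i * ((∑ y, P x y * φ i y) - ∑ y, Pbar x y * φ i y)| ≤ c₂ * W := by
      calc |∑ i, w i * ((∑ y, P x y * φ i y) - ∑ y, Pbar x y * φ i y)|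
          ≤ ∑ i, |w i| * |(∑ y, P x y * φ i y) - ∑ y, Pbar x y * φ i y| := by
            refine (Finset.abs_sum_le_sum_abs _ _).trans ?_
            apply Finset.sum_le_sum; intro i _; rw [abs_mul]
        _ ≤ ∑ i, W * |(∑ y, P x y * φ i y) - ∑ y, Pbar x y * φ i y| := by
            apply Finset.sum_le_sum; intro i _
            exact mul_le_mul_of_nonneg_right (le_supNorm w i) (abs_nonneg _)
        _ = W * ∑ i, |(∑ y, P x y * φ i y) - ∑ y, Pbar x y * φ i y| := by
            rw [Finset.mul_sum]
        _ ≤ W * c₂ := mul_le_mul_of_nonneg_left (hQ x) hWnn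
        _ = c₂ * W := mul_comm _ _
    calc |(∑ y, Pbar x y * (V y - Vbar y))
          + (∑ y, (P x y - Pbar x y) * (V y - ∑ i, w i * φ i y))
          + (∑ i, w i * ((∑ y, P x y * φ i y) - ∑ y, Pbar x y * φ i y))|
        ≤ |∑ y, Pbar x y * (V y - Vbar y)|
          + |∑ y, (P x y - Pbar x y) * (V y - ∑ i, w i * φ i y)|
          + |∑ i, w i * ((∑ y, P x y * φ i y) - ∑ y, Pbar x y * φ i y)| := by
            exact (abs_add_le _ _).trans (by gcongr; exact abs_add_le _ _)
      _ ≤ D + c₁ * K + c₂ * W := by gcongr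
  have hDle : D ≤ γ * (D + c₁ * K + c₂ * W) := supNorm_le key
  have hfin : D ≤ (γ * c₁ * K + γ * c₂ * W) / (1 - γ) := by
    rw [le_div_iff₀ hγ1']
    nlinarith
  refine hfin.trans (le_of_eq ?_)
  rw [he₁, he₂, hc₁, hc₂]
  field_simp
end

section
/- Let P and P̄ be transition kernels on S×A, r : S×A → ℝ, and γ ∈ [0,1). Let π* be an optimal deterministic policy for (r,P) with V* := V^{π*}(r,P), and let π̄ be an optimal deterministic policy for (r,P̄) with V̄ := V^{π̄}(r,P̄). Then ‖V* − V̄‖∞ ≤ max( ‖(I − γP̄^{π̄})⁻¹(γP^{π̄} − γP̄^{π̄})·V*‖∞ , ‖(I − γP̄^{π*})⁻¹(γP^{π*} − γP̄^{π*})·V*‖∞ ). -/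
open Finset Matrix

/-- The row-stochastic matrix `P^μ` induced by a deterministic policy `μ`. -/
noncomputable def polMat {S A : Type*} (P : S → A → S → ℝ) (μ : S → A) : Matrix S S ℝ :=
  Matrix.of fun x y => P x (μ x) y

/-- The value function `V^μ(r,P) = (I - γ P^μ)⁻¹ r^μ` of a deterministic policy `μ`. -/
noncomputable def polVal {S A : Type*} [Fintype S] [DecidableEq S]
    (γ : ℝ) (r : S → A → ℝ) (P : S → A → S → ℝ) (μ : S → A) : S → ℝ :=
  ((1 : Matrix S S ℝ) - γ • polMat P μ)⁻¹.mulVec (fun x => r x (μ x))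

section Aux
set_option linter.unusedSectionVars false
variable {S : Type*} [Fintype S] [Nonempty S] [DecidableEq S]

lemma sup_mulVec_form {A : Type*} (γ : ℝ) (P : S → A → S → ℝ) (μ : S → A) (v : S → ℝ) (x : S) :
    ((1 : Matrix S S ℝ) - γ • polMat P μ).mulVec v x
      = v x - γ * ∑ y, P x (μ x) y * v y := by
  rw [Matrix.sub_mulVec, Matrix.smul_mulVec, Matrix.one_mulVec]
  simp [Matrix.mulVec, dotProduct, polMat]

lemma sup_mono_aux {γ : ℝ} (hγ0 : 0 ≤ γ) (hγ1 : γ < 1)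
    (Q : Matrix S S ℝ) (hQ0 : ∀ x y, 0 ≤ Q x y) (hQ1 : ∀ x, ∑ y, Q x y = 1)
    (w : S → ℝ) (hw : ∀ x, 0 ≤ ((1 : Matrix S S ℝ) - γ • Q).mulVec w x) :
    ∀ x, 0 ≤ w x := by
  obtain ⟨x0, -, hx0⟩ := Finset.exists_min_image Finset.univ w
    ⟨Classical.arbitrary S, Finset.mem_univ _⟩
  have key : ∀ y, w x0 ≤ w y := fun y => hx0 y (Finset.mem_univ y)
  have h1 : 0 ≤ w x0 - γ * ∑ y, Q x0 y * w y := by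
    have := hw x0
    rw [Matrix.sub_mulVec, Matrix.smul_mulVec, Matrix.one_mulVec] at this
    simpa [Matrix.mulVec, dotProduct] using this
  have h2 : w x0 ≤ ∑ y, Q x0 y * w y := by
    calc w x0 = ∑ y, Q x0 y * w x0 := by rw [← Finset.sum_mul, hQ1, one_mul]
    _ ≤ ∑ y, Q x0 y * w y :=
      Finset.sum_le_sum fun y _ => mul_le_mul_of_nonneg_left (key y) (hQ0 x0 y)
  have h3 : γ * w x0 ≤ γ * ∑ y, Q x0 y * w y := mul_le_mul_of_nonneg_left h2 hγ0
  have h5 : 0 ≤ w x0 := by nlinarith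
  exact fun x => le_trans h5 (key x)

lemma sup_isUnit_det_aux {γ : ℝ} (hγ0 : 0 ≤ γ) (hγ1 : γ < 1)
    (Q : Matrix S S ℝ) (hQ0 : ∀ x y, 0 ≤ Q x y) (hQ1 : ∀ x, ∑ y, Q x y = 1) :
    IsUnit ((1 : Matrix S S ℝ) - γ • Q).det := by
  rw [isUnit_iff_ne_zero]
  intro hdet
  obtain ⟨v, hv, hv0⟩ := (Matrix.exists_mulVec_eq_zero_iff).2 hdet
  apply hv
  have p1 := sup_mono_aux hγ0 hγ1 Q hQ0 hQ1 v (fun x => by rw [hv0]; simp)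
  have p2 := sup_mono_aux hγ0 hγ1 Q hQ0 hQ1 (-v) (fun x => by
    rw [Matrix.mulVec_neg, hv0]; simp)
  funext x
  have := p2 x
  simp only [Pi.neg_apply, neg_nonneg] at this
  exact le_antisymm this (p1 x)

variable {A : Type*} {γ : ℝ} {P : S → A → S → ℝ}

lemma sup_mono' (hγ0 : 0 ≤ γ) (hγ1 : γ < 1)
    (hP0 : ∀ x a y, 0 ≤ P x a y) (hP1 : ∀ x a, ∑ y, P x a y = 1) (μ : S → A)
    (w : S → ℝ) (hw : ∀ x, 0 ≤ ((1 : Matrix S S ℝ) - γ • polMat P μ).mulVec w x) :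
    ∀ x, 0 ≤ w x :=
  sup_mono_aux hγ0 hγ1 (polMat P μ) (fun x y => hP0 x (μ x) y) (fun x => hP1 x (μ x)) w hw

lemma sup_isUnit' (hγ0 : 0 ≤ γ) (hγ1 : γ < 1)
    (hP0 : ∀ x a y, 0 ≤ P x a y) (hP1 : ∀ x a, ∑ y, P x a y = 1) (μ : S → A) :
    IsUnit ((1 : Matrix S S ℝ) - γ • polMat P μ).det :=
  sup_isUnit_det_aux hγ0 hγ1 (polMat P μ) (fun x y => hP0 x (μ x) y) (fun x => hP1 x (μ x))

/-- Bellman equation for `polVal`. -/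
lemma sup_polVal_spec (hγ0 : 0 ≤ γ) (hγ1 : γ < 1)
    (hP0 : ∀ x a y, 0 ≤ P x a y) (hP1 : ∀ x a, ∑ y, P x a y = 1) (r : S → A → ℝ) (μ : S → A) :
    ((1 : Matrix S S ℝ) - γ • polMat P μ).mulVec (polVal γ r P μ) = fun x => r x (μ x) := by
  unfold polVal
  rw [Matrix.mulVec_mulVec, Matrix.mul_nonsing_inv _ (sup_isUnit' hγ0 hγ1 hP0 hP1 μ),
    Matrix.one_mulVec]

lemma sup_polVal_bellman (hγ0 : 0 ≤ γ) (hγ1 : γ < 1)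
    (hP0 : ∀ x a y, 0 ≤ P x a y) (hP1 : ∀ x a, ∑ y, P x a y = 1) (r : S → A → ℝ) (μ : S → A)
    (x : S) :
    polVal γ r P μ x = r x (μ x) + γ * ∑ y, P x (μ x) y * polVal γ r P μ y := by
  have := congrFun (sup_polVal_spec hγ0 hγ1 hP0 hP1 r μ) x
  rw [sup_mulVec_form] at this
  linarith

/-- Policy improvement. -/
lemma sup_improve (hγ0 : 0 ≤ γ) (hγ1 : γ < 1)
    (hP0 : ∀ x a y, 0 ≤ P x a y) (hP1 : ∀ x a, ∑ y, P x a y = 1) (r : S → A → ℝ) (μ : S → A)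
    (V : S → ℝ) (hV : ∀ x, V x ≤ r x (μ x) + γ * ∑ y, P x (μ x) y * V y) :
    ∀ x, V x ≤ polVal γ r P μ x := by
  have key := sup_mono' hγ0 hγ1 hP0 hP1 μ (polVal γ r P μ - V) (fun x => by
    rw [Matrix.mulVec_sub, Pi.sub_apply, sup_mulVec_form, sup_mulVec_form]
    have h1 := sup_polVal_bellman hγ0 hγ1 hP0 hP1 r μ x
    have h2 := hV x
    linarith)
  intro x
  have := key x
  simp only [Pi.sub_apply, sub_nonneg] at this
  exact this

/-- Bellman optimality inequality for the optimal value. -/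
lemma sup_bellman_opt (hγ0 : 0 ≤ γ) (hγ1 : γ < 1)
    (hP0 : ∀ x a y, 0 ≤ P x a y) (hP1 : ∀ x a, ∑ y, P x a y = 1) (r : S → A → ℝ)
    (πstar : S → A) (hopt : ∀ μ : S → A, ∀ x, polVal γ r P μ x ≤ polVal γ r P πstar x)
    (x : S) (a : A) :
    r x a + γ * ∑ y, P x a y * polVal γ r P πstar y ≤ polVal γ r P πstar x := by
  set Vs := polVal γ r P πstar with hVs
  by_contra hlt
  push_neg at hlt
  set μ : S → A := Function.update πstar x a with hμ
  have hV : ∀ z, Vs z ≤ r z (μ z) + γ * ∑ y, P z (μ z) y * Vs y := by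
    intro z
    by_cases hz : z = x
    · subst hz
      simp only [hμ, Function.update_self]
      exact le_of_lt hlt
    · simp only [hμ, Function.update_of_ne hz]
      exact le_of_eq (sup_polVal_bellman hγ0 hγ1 hP0 hP1 r πstar z)
  have h1 : ∀ z, Vs z ≤ polVal γ r P μ z := sup_improve hγ0 hγ1 hP0 hP1 r μ Vs hV
  have h2 : ∀ z, polVal γ r P μ z = Vs z := fun z => le_antisymm (hopt μ z) (h1 z)
  have h3 := sup_polVal_bellman hγ0 hγ1 hP0 hP1 r μ x
  simp only [h2] at h3; simp only [hμ, Function.update_self] at h3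
  linarith

lemma sup_le_supNorm (v : S → ℝ) (x : S) : |v x| ≤ supNorm v := by
  unfold supNorm
  exact le_ciSup (Set.Finite.bddAbove (Set.finite_range fun x => |v x|)) x

end Aux

theorem stmt17 {S A : Type*} [Fintype S] [Nonempty S] [DecidableEq S] [Fintype A] [Nonempty A]
    (P Pbar : S → A → S → ℝ)
    (hP0 : ∀ x a y, 0 ≤ P x a y) (hP1 : ∀ x a, ∑ y, P x a y = 1)
    (hPbar0 : ∀ x a y, 0 ≤ Pbar x a y) (hPbar1 : ∀ x a, ∑ y, Pbar x a y = 1)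
    (r : S → A → ℝ) (γ : ℝ) (hγ0 : 0 ≤ γ) (hγ1 : γ < 1)
    (πstar πbar : S → A)
    (hopt : ∀ μ : S → A, ∀ x, polVal γ r P μ x ≤ polVal γ r P πstar x)
    (hoptbar : ∀ μ : S → A, ∀ x, polVal γ r Pbar μ x ≤ polVal γ r Pbar πbar x)
    (Vstar Vbar : S → ℝ)
    (hVstar : Vstar = polVal γ r P πstar)
    (hVbar : Vbar = polVal γ r Pbar πbar) :
    supNorm (fun x => Vstar x - Vbar x) ≤
      max
        (supNorm (((1 : Matrix S S ℝ) - γ • polMat Pbar πbar)⁻¹.mulVec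
          ((γ • polMat P πbar - γ • polMat Pbar πbar).mulVec Vstar)))
        (supNorm (((1 : Matrix S S ℝ) - γ • polMat Pbar πstar)⁻¹.mulVec
          ((γ • polMat P πstar - γ • polMat Pbar πstar).mulVec Vstar))) := by
  classical
  set Mb := (1 : Matrix S S ℝ) - γ • polMat Pbar πbar with hMb
  set Ms := (1 : Matrix S S ℝ) - γ • polMat Pbar πstar with hMs
  set Ab := (1 : Matrix S S ℝ) - γ • polMat P πbar with hAb
  set As := (1 : Matrix S S ℝ) - γ • polMat P πstar with hAs
  have hMbu : IsUnit Mb.det := sup_isUnit' hγ0 hγ1 hPbar0 hPbar1 πbar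
  have hMsu : IsUnit Ms.det := sup_isUnit' hγ0 hγ1 hPbar0 hPbar1 πstar
  -- rewrite difference matrices
  have hdb : γ • polMat P πbar - γ • polMat Pbar πbar = Mb - Ab := by
    rw [hMb, hAb]; abel
  have hds : γ • polMat P πstar - γ • polMat Pbar πstar = Ms - As := by
    rw [hMs, hAs]; abel
  set t1 := Mb⁻¹.mulVec ((γ • polMat P πbar - γ • polMat Pbar πbar).mulVec Vstar) with ht1
  set t2 := Ms⁻¹.mulVec ((γ • polMat P πstar - γ • polMat Pbar πstar).mulVec Vstar) with ht2
  have ht1' : t1 = Vstar - Mb⁻¹.mulVec (Ab.mulVec Vstar) := by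
    rw [ht1, hdb, Matrix.sub_mulVec, Matrix.mulVec_sub, Matrix.mulVec_mulVec,
      Matrix.nonsing_inv_mul _ hMbu, Matrix.one_mulVec]
  have ht2' : t2 = Vstar - Ms⁻¹.mulVec (As.mulVec Vstar) := by
    rw [ht2, hds, Matrix.sub_mulVec, Matrix.mulVec_sub, Matrix.mulVec_mulVec,
      Matrix.nonsing_inv_mul _ hMsu, Matrix.one_mulVec]
  -- As.mulVec Vstar = r^{πstar}
  have hAsV : As.mulVec Vstar = fun x => r x (πstar x) := by
    rw [hVstar]; exact sup_polVal_spec hγ0 hγ1 hP0 hP1 r πstar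
  -- t2 = Vstar - polVal γ r Pbar πstar
  have ht2'' : t2 = Vstar - polVal γ r Pbar πstar := by
    rw [ht2', hAsV]; rfl
  -- upper bound: Vstar x - Vbar x ≤ t2 x
  have hub : ∀ x, Vstar x - Vbar x ≤ t2 x := by
    intro x
    rw [ht2'', Pi.sub_apply]
    have := hoptbar πstar x
    rw [← hVbar] at this
    linarith
  -- Bellman optimality inequality for Vstar at actions πbar x
  have hbell : ∀ x, r x (πbar x) + γ * ∑ y, P x (πbar x) y * Vstar y ≤ Vstar x := by
    intro x
    have := sup_bellman_opt hγ0 hγ1 hP0 hP1 r πstar hopt x (πbar x)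
    rw [← hVstar] at this
    simpa [← hVstar] using this
  -- lower bound: Vbar x - Vstar x ≤ - t1 x
  have hw : ∀ x, 0 ≤ (Mb⁻¹.mulVec (Ab.mulVec Vstar) - Vbar) x := by
    apply sup_mono' hγ0 hγ1 hPbar0 hPbar1 πbar
    intro x
    rw [Matrix.mulVec_sub, Matrix.mulVec_mulVec, Matrix.mul_nonsing_inv _ hMbu,
      Matrix.one_mulVec]
    have hMbV : Mb.mulVec Vbar x = r x (πbar x) := by
      rw [hVbar]
      exact congrFun (sup_polVal_spec hγ0 hγ1 hPbar0 hPbar1 r πbar) x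
    have hAbV : Ab.mulVec Vstar x = Vstar x - γ * ∑ y, P x (πbar x) y * Vstar y := by
      rw [hAb]; exact sup_mulVec_form γ P πbar Vstar x
    have := hbell x
    rw [Pi.sub_apply, hMbV, hAbV]
    linarith
  have hlb : ∀ x, Vbar x - Vstar x ≤ -(t1 x) := by
    intro x
    have h1 := hw x
    rw [Pi.sub_apply] at h1
    have h2 : t1 x = Vstar x - Mb⁻¹.mulVec (Ab.mulVec Vstar) x := by
      rw [ht1']; rfl
    linarith
  -- conclude
  apply ciSup_le
  intro x
  rw [abs_sub_le_iff]
  constructor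
  · exact le_trans (hub x) (le_trans (le_abs_self _) (le_trans (sup_le_supNorm t2 x)
      (le_max_right _ _)))
  · exact le_trans (hlb x) (le_trans (neg_le_abs _) (le_trans (sup_le_supNorm t1 x)
      (le_max_left _ _)))
end

section
/- Suppose there exist A ∈ ℝ and B ≥ 0 such that A − B/2 ≤ φᵢ(z) ≤ A + B/2 for all z ∈ Z and all 1 ≤ i ≤ d, and let b ∈ ℝ^d satisfy A − B/2 ≤ bᵢ ≤ A + B/2 for all i. Let β > 0 and let λ* be a maximizer of D_{β,b} over ℝ^d. Then the density of the Gibbs tilt q_{λ*} with respect to p̂ satisfies exp(⟨λ*, φ(z)⟩ − Λ_{λ*}) ≤ exp(2B²d/β²) for every z ∈ Z. -/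
open MeasureTheory

/-- Euclidean inner product on `ℝ^d`. -/
noncomputable def dotd {d : ℕ} (lam v : Fin d → ℝ) : ℝ := ∑ i, lam i * v i

/-- The log-normalizer `Λ_λ = log ∫ exp⟨λ, φ(z)⟩ dp̂(z)`. -/
noncomputable def LamZ {Z : Type*} [MeasurableSpace Z] (phat : Measure Z)
    {d : ℕ} (φ : Z → Fin d → ℝ) (lam : Fin d → ℝ) : ℝ :=
  Real.log (∫ z, Real.exp (dotd lam (φ z)) ∂phat)

lemma dotd_update {d : ℕ} (lam v : Fin d → ℝ) (i : Fin d) (m : ℝ) :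
    dotd (Function.update lam i m) v = dotd lam v + (m - lam i) * v i := by
  unfold dotd
  have h : ∀ j, Function.update lam i m j * v j
      = lam j * v j + (if j = i then (m - lam i) * v i else 0) := by
    intro j
    by_cases hj : j = i
    · subst hj; simp [Function.update_self]; ring
    · simp [Function.update_of_ne hj, hj]
  simp only [h, Finset.sum_add_distrib, Finset.sum_ite_eq' Finset.univ i, Finset.mem_univ,
    if_true]

lemma sq_update {d : ℕ} (lam : Fin d → ℝ) (i : Fin d) (m : ℝ) :
    ∑ j, (Function.update lam i m j) ^ 2 = (∑ j, (lam j) ^ 2) + (m ^ 2 - lam i ^ 2) := by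
  have h : ∀ j, (Function.update lam i m j) ^ 2
      = (lam j) ^ 2 + (if j = i then m ^ 2 - lam i ^ 2 else 0) := by
    intro j
    by_cases hj : j = i
    · subst hj; simp [Function.update_self]
    · simp [Function.update_of_ne hj, hj]
  simp only [h, Finset.sum_add_distrib, Finset.sum_ite_eq' Finset.univ i, Finset.mem_univ,
    if_true]

lemma dotd_meas {Z : Type*} [MeasurableSpace Z] {d : ℕ} {φ : Z → Fin d → ℝ}
    (hφm : Measurable φ) (lam : Fin d → ℝ) : Measurable fun z => dotd lam (φ z) := by
  unfold dotd
  exact Finset.measurable_sum _ fun i _ =>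
    measurable_const.mul ((measurable_pi_apply i).comp hφm)

lemma dotd_abs_bound {Z : Type*} {d : ℕ} {φ : Z → Fin d → ℝ} {A B : ℝ}
    (hφlb : ∀ z i, A - B / 2 ≤ φ z i) (hφub : ∀ z i, φ z i ≤ A + B / 2)
    (lam : Fin d → ℝ) (z : Z) :
    |dotd lam (φ z)| ≤ ∑ i, |lam i| * (|A| + B) := by
  refine (Finset.abs_sum_le_sum_abs _ _).trans (Finset.sum_le_sum fun i _ => ?_)
  rw [abs_mul]
  refine mul_le_mul_of_nonneg_left ?_ (abs_nonneg _)
  have h1 := hφlb z i; have h2 := hφub z i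
  have := le_abs_self A; have := neg_abs_le A
  rw [abs_le]; constructor <;> linarith

lemma exp_dotd_integrable {Z : Type*} [MeasurableSpace Z] (phat : Measure Z)
    [IsProbabilityMeasure phat] {d : ℕ} {φ : Z → Fin d → ℝ} (hφm : Measurable φ) {A B : ℝ}
    (hφlb : ∀ z i, A - B / 2 ≤ φ z i) (hφub : ∀ z i, φ z i ≤ A + B / 2) (lam : Fin d → ℝ) :
    Integrable (fun z => Real.exp (dotd lam (φ z))) phat := by
  refine Integrable.mono' (integrable_const (Real.exp (∑ i, |lam i| * (|A| + B))))
    ((Real.measurable_exp.comp (dotd_meas hφm lam)).aestronglyMeasurable) ?_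
  filter_upwards with z
  rw [Real.norm_eq_abs, abs_of_pos (Real.exp_pos _)]
  exact Real.exp_le_exp.2 ((le_abs_self _).trans (dotd_abs_bound hφlb hφub lam z))

lemma integral_exp_dotd_pos {Z : Type*} [MeasurableSpace Z] (phat : Measure Z)
    [IsProbabilityMeasure phat] {d : ℕ} {φ : Z → Fin d → ℝ} (hφm : Measurable φ) {A B : ℝ}
    (hφlb : ∀ z i, A - B / 2 ≤ φ z i) (hφub : ∀ z i, φ z i ≤ A + B / 2) (lam : Fin d → ℝ) :
    0 < ∫ z, Real.exp (dotd lam (φ z)) ∂phat := by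
  have h1 : Real.exp (-(∑ i, |lam i| * (|A| + B)))
      ≤ ∫ z, Real.exp (dotd lam (φ z)) ∂phat := by
    have := integral_mono (μ := phat)
      (integrable_const (Real.exp (-(∑ i, |lam i| * (|A| + B)))))
      (exp_dotd_integrable phat hφm hφlb hφub lam)
      (fun z => Real.exp_le_exp.2 (by
        have := (abs_le.1 (dotd_abs_bound hφlb hφub lam z)).1; linarith))
    simpa using this
  exact lt_of_lt_of_le (Real.exp_pos _) h1

lemma LamZ_ge {Z : Type*} [MeasurableSpace Z] (phat : Measure Z)
    [IsProbabilityMeasure phat] {d : ℕ} {φ : Z → Fin d → ℝ} (hφm : Measurable φ) {A B : ℝ}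
    (hφlb : ∀ z i, A - B / 2 ≤ φ z i) (hφub : ∀ z i, φ z i ≤ A + B / 2)
    (lam : Fin d → ℝ) (c : ℝ) (hc : ∀ z, c ≤ dotd lam (φ z)) :
    c ≤ LamZ phat φ lam := by
  have h1 : Real.exp c ≤ ∫ z, Real.exp (dotd lam (φ z)) ∂phat := by
    have := integral_mono (μ := phat) (integrable_const (Real.exp c))
      (exp_dotd_integrable phat hφm hφlb hφub lam)
      (fun z => Real.exp_le_exp.2 (hc z))
    simpa using this
  calc c = Real.log (Real.exp c) := (Real.log_exp c).symm
    _ ≤ LamZ phat φ lam := Real.log_le_log (Real.exp_pos c) h1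

lemma LamZ_sub_ge {Z : Type*} [MeasurableSpace Z] (phat : Measure Z)
    [IsProbabilityMeasure phat] {d : ℕ} {φ : Z → Fin d → ℝ} (hφm : Measurable φ) {A B : ℝ}
    (hφlb : ∀ z i, A - B / 2 ≤ φ z i) (hφub : ∀ z i, φ z i ≤ A + B / 2)
    (lam mu : Fin d → ℝ) (c : ℝ)
    (hc : ∀ z, c + dotd mu (φ z) ≤ dotd lam (φ z)) :
    c + LamZ phat φ mu ≤ LamZ phat φ lam := by
  have hpos := integral_exp_dotd_pos phat hφm hφlb hφub mu
  have h1 : Real.exp c * ∫ z, Real.exp (dotd mu (φ z)) ∂phat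
      ≤ ∫ z, Real.exp (dotd lam (φ z)) ∂phat := by
    rw [← integral_const_mul]
    exact integral_mono ((exp_dotd_integrable phat hφm hφlb hφub mu).const_mul _)
      (exp_dotd_integrable phat hφm hφlb hφub lam)
      (fun z => by rw [← Real.exp_add]; exact Real.exp_le_exp.2 (hc z))
  have h2 : Real.log (Real.exp c * ∫ z, Real.exp (dotd mu (φ z)) ∂phat)
      ≤ LamZ phat φ lam := Real.log_le_log (by positivity) h1
  rwa [Real.log_mul (Real.exp_ne_zero c) (ne_of_gt hpos), Real.log_exp] at h2

/-- The `ℓ₂²`-regularized dual objective `D_{β,b}(λ) = ⟨λ,b⟩ − Λ_λ − (β²/4)‖λ‖₂²`. -/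
noncomputable def Dreg {Z : Type*} [MeasurableSpace Z] (phat : Measure Z)
    {d : ℕ} (φ : Z → Fin d → ℝ) (β : ℝ) (b lam : Fin d → ℝ) : ℝ :=
  dotd lam b - LamZ phat φ lam - (β ^ 2 / 4) * ∑ i, (lam i) ^ 2

theorem stmt18 {Z : Type*} [MeasurableSpace Z] (phat : Measure Z) [IsProbabilityMeasure phat]
    {d : ℕ} (φ : Z → Fin d → ℝ) (hφm : Measurable φ)
    (A B : ℝ) (hB : 0 ≤ B)
    (hφlb : ∀ z i, A - B / 2 ≤ φ z i) (hφub : ∀ z i, φ z i ≤ A + B / 2)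
    (b : Fin d → ℝ) (hblb : ∀ i, A - B / 2 ≤ b i) (hbub : ∀ i, b i ≤ A + B / 2)
    (β : ℝ) (hβ : 0 < β) (lamStar : Fin d → ℝ)
    (hmax : ∀ lam, Dreg phat φ β b lam ≤ Dreg phat φ β b lamStar) :
    ∀ z, Real.exp (dotd lamStar (φ z) - LamZ phat φ lamStar) ≤
      Real.exp (2 * B ^ 2 * d / β ^ 2) := by
  have hβ2 : (0:ℝ) < β ^ 2 := by positivity
  set m : ℝ := 2 * B / β ^ 2 with hm
  have hm0 : 0 ≤ m := by positivity
  have hmB : β ^ 2 * m = 2 * B := by rw [hm]; field_simp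
  -- Step 1: coordinate bound on the maximizer
  have hstep1 : ∀ i, |lamStar i| ≤ m := by
    intro i
    rw [abs_le]
    constructor
    · by_contra h
      push_neg at h   -- lamStar i < -m
      set mu := Function.update lamStar i (-m) with hmu
      have hLam : (lamStar i - (-m)) * (A + B / 2) + LamZ phat φ mu
          ≤ LamZ phat φ lamStar := by
        refine LamZ_sub_ge phat hφm hφlb hφub lamStar mu _ (fun z' => ?_)
        have hd := dotd_update lamStar (φ z') i (-m)
        have hmul : (lamStar i - (-m)) * (A + B / 2) ≤ (lamStar i - (-m)) * φ z' i := by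
          apply mul_le_mul_of_nonpos_left (hφub z' i)
          linarith
        rw [← hmu] at hd
        linarith
      have hD := hmax mu
      unfold Dreg at hD
      rw [hmu, dotd_update, sq_update, ← hmu] at hD
      have hb1 := hbub i; have hb2 := hblb i
      nlinarith [sq_nonneg (lamStar i + m), mul_pos hβ2 (mul_pos
        (show (0:ℝ) < -m - lamStar i by linarith)
        (show (0:ℝ) < -m - lamStar i by linarith))]
    · by_contra h
      push_neg at h   -- m < lamStar i
      set mu := Function.update lamStar i m with hmu
      have hLam : (lamStar i - m) * (A - B / 2) + LamZ phat φ mu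
          ≤ LamZ phat φ lamStar := by
        refine LamZ_sub_ge phat hφm hφlb hφub lamStar mu _ (fun z' => ?_)
        have hd := dotd_update lamStar (φ z') i m
        have hmul : (lamStar i - m) * (A - B / 2) ≤ (lamStar i - m) * φ z' i := by
          apply mul_le_mul_of_nonneg_left (hφlb z' i)
          linarith
        rw [← hmu] at hd
        linarith
      have hD := hmax mu
      unfold Dreg at hD
      rw [hmu, dotd_update, sq_update, ← hmu] at hD
      have hb1 := hbub i; have hb2 := hblb i
      nlinarith [mul_pos hβ2 (mul_pos
        (show (0:ℝ) < lamStar i - m by linarith)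
        (show (0:ℝ) < lamStar i - m by linarith))]
  -- Step 2
  intro z
  apply Real.exp_le_exp.2
  have hc : (∑ i, (lamStar i * A - |lamStar i| * (B / 2))) ≤ LamZ phat φ lamStar := by
    refine LamZ_ge phat hφm hφlb hφub lamStar _ (fun z' => ?_)
    unfold dotd
    refine Finset.sum_le_sum fun i _ => ?_
    have h1 := hφlb z' i; have h2 := hφub z' i
    have habs : |lamStar i * (φ z' i - A)| ≤ |lamStar i| * (B / 2) := by
      rw [abs_mul]
      exact mul_le_mul_of_nonneg_left (abs_le.2 ⟨by linarith, by linarith⟩) (abs_nonneg _)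
    have := (abs_le.1 habs).1
    nlinarith [this]
  have hsum : dotd lamStar (φ z) - (∑ i, (lamStar i * A - |lamStar i| * (B / 2)))
      ≤ ∑ _i : Fin d, m * B := by
    unfold dotd
    rw [← Finset.sum_sub_distrib]
    refine Finset.sum_le_sum fun i _ => ?_
    have h1 := hφlb z i; have h2 := hφub z i
    have habs : |lamStar i * (φ z i - A)| ≤ |lamStar i| * (B / 2) := by
      rw [abs_mul]
      exact mul_le_mul_of_nonneg_left (abs_le.2 ⟨by linarith, by linarith⟩) (abs_nonneg _)
    have h3 := (abs_le.1 habs).2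
    have h4 := hstep1 i
    nlinarith [h3, h4]
  have hcard : (∑ _i : Fin d, m * B) = d * (m * B) := by
    rw [Finset.sum_const, Finset.card_univ, Fintype.card_fin, nsmul_eq_mul]
  have hfinal : (d : ℝ) * (m * B) = 2 * B ^ 2 * d / β ^ 2 := by
    rw [hm]; field_simp
  calc dotd lamStar (φ z) - LamZ phat φ lamStar
      ≤ dotd lamStar (φ z) - ∑ i, (lamStar i * A - |lamStar i| * (B / 2)) := by linarith
    _ ≤ ∑ _i : Fin d, m * B := hsum
    _ = 2 * B ^ 2 * d / β ^ 2 := by rw [hcard, hfinal]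
end
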